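/- Let μ correspond to an indeterminate moment problem with orthonormal polynomials (P_n). Define K(z,w) = Σ_{n=0}^∞ P_n(z)P_n(w) = Σ_{j,k} a_{j,k} z^j w^k and the matrix A = (a_{j,k}). Then A = B B^*, where B = (b_{k,n}) is the coefficient matrix of the P_n; in particular a_{j,k} = Σ_{n=max(j,k)}^∞ b_{j,n} b_{k,n}, the series converging absolutely. -/

import Mathlib

open MeasureTheory Polynomial Finset

set_option maxHeartbeats 2000000

noncomputable def Complex.abs : AbsoluteValue ℂ ℝ where
  toFun z := ‖z‖
  map_mul' := norm_mul
  nonneg' := norm_nonneg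
  eq_zero' _ := norm_eq_zero
  add_le' := norm_add_le

lemma Complex.norm_eq_abs (z : ℂ) : ‖z‖ = Complex.abs z := rfl

lemma Complex.abs_exp (z : ℂ) : Complex.abs (Complex.exp z) = Real.exp z.re :=
  Complex.norm_exp z

lemma Complex.abs_ofReal (r : ℝ) : Complex.abs (r : ℂ) = |r| := by
  show ‖(r : ℂ)‖ = |r|
  simp

lemma Complex.abs_natCast (n : ℕ) : Complex.abs (n : ℂ) = n := by
  show ‖(n : ℂ)‖ = n
  simp

lemma Complex.abs_I : Complex.abs Complex.I = 1 := by
  show ‖Complex.I‖ = 1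
  simp

lemma Complex.sq_abs (z : ℂ) : Complex.abs z ^ 2 = Complex.normSq z :=
  Complex.sq_norm z


lemma integrable_polyEval (μ : Measure ℝ) (hmom : ∀ n : ℕ, Integrable (fun x => x ^ n) μ)
    (p : Polynomial ℝ) : Integrable (fun x => p.eval x) μ := by
  have h : (fun x => p.eval x) = fun x => ∑ i ∈ range (p.natDegree + 1), p.coeff i * x ^ i := by
    funext x; exact Polynomial.eval_eq_sum_range x
  rw [h]
  exact integrable_finset_sum _ (fun i _ => (hmom i).const_mul _)

lemma span_lemma (P : ℕ → Polynomial ℝ) (hdeg : ∀ n, (P n).natDegree = n)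
    (hlead : ∀ n, (P n).leadingCoeff ≠ 0) :
    ∀ N (p : Polynomial ℝ), p.natDegree ≤ N →
      ∃ c : ℕ → ℝ, p = ∑ m ∈ range (N + 1), c m • P m := by
  intro N
  induction N with
  | zero =>
    intro p hp
    have h0 : P 0 = Polynomial.C ((P 0).coeff 0) :=
      Polynomial.eq_C_of_natDegree_le_zero (le_of_eq (hdeg 0))
    have hc0 : (P 0).coeff 0 ≠ 0 := by
      have : (P 0).leadingCoeff = (P 0).coeff 0 := by
        rw [Polynomial.leadingCoeff, hdeg 0]
      rw [← this]; exact hlead 0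
    refine ⟨fun _ => p.coeff 0 / (P 0).coeff 0, ?_⟩
    rw [Finset.sum_range_one]
    show p = (p.coeff 0 / (P 0).coeff 0) • P 0
    rw [h0, Polynomial.smul_C, smul_eq_mul, Polynomial.coeff_C_zero, div_mul_cancel₀ _ hc0]
    exact Polynomial.eq_C_of_natDegree_le_zero hp
  | succ N ih =>
    intro p hp
    set t := p.coeff (N + 1) / (P (N + 1)).leadingCoeff with ht
    have hq : (p - t • P (N + 1)).natDegree ≤ N := by
      rw [Polynomial.natDegree_le_iff_coeff_eq_zero]
      intro M hM
      rw [Polynomial.coeff_sub, Polynomial.coeff_smul, smul_eq_mul]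
      rcases eq_or_lt_of_le (Nat.succ_le_of_lt hM) with h | h
      · have hPc : (P (N + 1)).coeff (N + 1) = (P (N + 1)).leadingCoeff := by
          rw [Polynomial.leadingCoeff, hdeg (N + 1)]
        rw [← h, hPc, ht, div_mul_cancel₀ _ (hlead (N + 1)), sub_self]
      · have h1 : p.coeff M = 0 :=
          Polynomial.coeff_eq_zero_of_natDegree_lt (lt_of_le_of_lt hp h)
        have h2 : (P (N + 1)).coeff M = 0 :=
          Polynomial.coeff_eq_zero_of_natDegree_lt (by rw [hdeg (N + 1)]; exact h)
        rw [h1, h2, mul_zero, sub_zero]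
    obtain ⟨c, hc⟩ := ih _ hq
    refine ⟨fun m => if m = N + 1 then t else c m, ?_⟩
    rw [Finset.sum_range_succ]
    show p = (∑ m ∈ range (N + 1), (if m = N + 1 then t else c m) • P m)
        + (if N + 1 = N + 1 then t else c (N + 1)) • P (N + 1)
    rw [if_pos rfl]
    have heq : ∑ m ∈ range (N + 1), (if m = N + 1 then t else c m) • P m
        = ∑ m ∈ range (N + 1), c m • P m := by
      apply Finset.sum_congr rfl
      intro m hm
      rw [if_neg (Nat.ne_of_lt (Finset.mem_range.mp hm))]
    rw [heq, ← hc]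
    ring

lemma gronwall (h t : ℕ → ℝ) (c H : ℝ) (hc : 0 ≤ c) (hH : 0 ≤ H)
    (hh : ∀ n, 0 ≤ h n) (hT : ∀ n, 0 ≤ t n)
    (hS : ∀ n, ∑ m ∈ range n, (h m) ^ 2 ≤ H)
    (hrec : ∀ n, t n ≤ h n * (1 + c * ∑ m ∈ range n, h m * t m)) :
    ∀ n, t n ≤ h n * Real.exp (c * H) := by
  have key : ∀ n, 1 + c * ∑ m ∈ range n, h m * t m
      ≤ Real.exp (c * ∑ m ∈ range n, (h m) ^ 2) := by
    intro n
    induction n with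
    | zero => simp
    | succ n ihn =>
      rw [Finset.sum_range_succ, Finset.sum_range_succ]
      have h1 : t n ≤ h n * (1 + c * ∑ m ∈ range n, h m * t m) := hrec n
      have hpos : (0:ℝ) ≤ 1 + c * ∑ m ∈ range n, h m * t m := by
        have : 0 ≤ ∑ m ∈ range n, h m * t m :=
          Finset.sum_nonneg fun m _ => mul_nonneg (hh m) (hT m)
        positivity
      have step : 1 + c * (∑ m ∈ range n, h m * t m + h n * t n)
          ≤ (1 + c * ∑ m ∈ range n, h m * t m) * (1 + c * h n ^ 2) := by
        have h2 : c * (h n * t n) ≤ c * (h n * (h n * (1 + c * ∑ m ∈ range n, h m * t m))) := by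
          apply mul_le_mul_of_nonneg_left _ hc
          exact mul_le_mul_of_nonneg_left h1 (hh n)
        nlinarith [h2]
      calc 1 + c * (∑ m ∈ range n, h m * t m + h n * t n)
          ≤ (1 + c * ∑ m ∈ range n, h m * t m) * (1 + c * h n ^ 2) := step
        _ ≤ Real.exp (c * ∑ m ∈ range n, (h m) ^ 2) * Real.exp (c * h n ^ 2) := by
            have hx : (1:ℝ) + c * h n ^ 2 ≤ Real.exp (c * h n ^ 2) := by
              have := Real.add_one_le_exp (c * h n ^ 2); linarith
            exact mul_le_mul ihn hx (by positivity) (le_of_lt (Real.exp_pos _))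
        _ = Real.exp (c * (∑ m ∈ range n, (h m) ^ 2 + h n ^ 2)) := by
            rw [← Real.exp_add]; congr 1; ring
  intro n
  calc t n ≤ h n * (1 + c * ∑ m ∈ range n, h m * t m) := hrec n
    _ ≤ h n * Real.exp (c * ∑ m ∈ range n, (h m) ^ 2) :=
        mul_le_mul_of_nonneg_left (key n) (hh n)
    _ ≤ h n * Real.exp (c * H) := by
        apply mul_le_mul_of_nonneg_left _ (hh n)
        exact Real.exp_le_exp.mpr (mul_le_mul_of_nonneg_left (hS n) hc)


lemma coeff_bound (p : Polynomial ℝ) {R M : ℝ} (hR : 0 < R)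
    (hM : ∀ z : ℂ, Complex.abs z = R → Complex.abs (Polynomial.aeval z p) ≤ M) (j : ℕ) :
    |p.coeff j| * R ^ j ≤ M := by
  set d := p.natDegree with hd
  set m := max (d + 1) (j + 1) with hm
  have hm0 : m ≠ 0 := by positivity
  have hjm : j < m := lt_of_lt_of_le (Nat.lt_succ_self j) (le_max_right _ _)
  have hdm : d < m := lt_of_lt_of_le (Nat.lt_succ_self d) (le_max_left _ _)
  set ζ : ℂ := Complex.exp (2 * Real.pi * Complex.I / m) with hζ
  have hprim : IsPrimitiveRoot ζ m := Complex.isPrimitiveRoot_exp m hm0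
  have hζm : ζ ^ m = 1 := hprim.pow_eq_one
  have habsζ : Complex.abs ζ = 1 := by
    rw [hζ, Complex.abs_exp]
    have : (2 * Real.pi * Complex.I / m).re = 0 := by
      simp [Complex.div_re]
    rw [this, Real.exp_zero]
  -- key identity
  have key : ∑ l ∈ range m, (Polynomial.aeval ((R : ℂ) * ζ ^ l) p) * ζ ^ (l * (m - j))
      = (m : ℂ) * (p.coeff j : ℂ) * (R : ℂ) ^ j := by
    have expand : ∀ l, (Polynomial.aeval ((R : ℂ) * ζ ^ l) p)
        = ∑ k ∈ range (d + 1), (p.coeff k : ℂ) * (R : ℂ) ^ k * (ζ ^ k) ^ l := by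
      intro l
      rw [Polynomial.aeval_eq_sum_range]
      apply Finset.sum_congr rfl
      intro k _
      simp only [Algebra.smul_def, Complex.coe_algebraMap, mul_pow, ← pow_mul]
      ring
    calc ∑ l ∈ range m, (Polynomial.aeval ((R : ℂ) * ζ ^ l) p) * ζ ^ (l * (m - j))
        = ∑ l ∈ range m, ∑ k ∈ range (d + 1),
            (p.coeff k : ℂ) * (R : ℂ) ^ k * ((ζ ^ (k + (m - j))) ^ l) := by
          apply Finset.sum_congr rfl
          intro l _
          rw [expand l, Finset.sum_mul]
          apply Finset.sum_congr rfl
          intro k _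
          rw [mul_assoc]
          congr 1
          rw [← pow_mul, ← pow_mul, ← pow_add]
          congr 1
          ring
      _ = ∑ k ∈ range (d + 1), (p.coeff k : ℂ) * (R : ℂ) ^ k
            * (∑ l ∈ range m, (ζ ^ (k + (m - j))) ^ l) := by
          rw [Finset.sum_comm]
          apply Finset.sum_congr rfl
          intro k _
          rw [Finset.mul_sum]
      _ = (m : ℂ) * (p.coeff j : ℂ) * (R : ℂ) ^ j := by
          have inner : ∀ k ∈ range (d + 1),
              (∑ l ∈ range m, (ζ ^ (k + (m - j))) ^ l) = if k = j then (m : ℂ) else 0 := by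
            intro k hk
            have hk' : k ≤ d := Nat.lt_succ_iff.mp (Finset.mem_range.mp hk)
            by_cases hkj : k = j
            · subst hkj
              have : ζ ^ (k + (m - k)) = 1 := by
                rw [Nat.add_sub_cancel' (le_of_lt hjm), hζm]
              rw [if_pos rfl, this]
              simp
            · rw [if_neg hkj]
              have hne : ζ ^ (k + (m - j)) ≠ 1 := by
                rw [Ne, hprim.pow_eq_one_iff_dvd]
                intro hdvd
                have h1 : 0 < k + (m - j) := by
                  have : 0 < m - j := Nat.sub_pos_of_lt hjm
                  omega
                have h2 : k + (m - j) < 2 * m := by omega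
                have h3 : k + (m - j) = m := by
                  rcases hdvd with ⟨c, hc⟩
                  rcases c with _ | c
                  · omega
                  · rcases c with _ | c
                    · omega
                    · exfalso
                      have hle : m * 2 ≤ m * (c + 1 + 1) := Nat.mul_le_mul_left m (by omega)
                      omega
                have : k = j := by omega
                exact hkj this
              have hpow : (ζ ^ (k + (m - j))) ^ m = 1 := by
                rw [← pow_mul, mul_comm, pow_mul, hζm, one_pow]
              rw [geom_sum_eq hne, hpow, sub_self, zero_div]
          calc ∑ k ∈ range (d + 1), (p.coeff k : ℂ) * (R : ℂ) ^ k
                * (∑ l ∈ range m, (ζ ^ (k + (m - j))) ^ l)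
              = ∑ k ∈ range (d + 1), (p.coeff k : ℂ) * (R : ℂ) ^ k
                * (if k = j then (m : ℂ) else 0) :=
                Finset.sum_congr rfl (fun k hk => by rw [inner k hk])
            _ = ∑ k ∈ range (d + 1),
                (if k = j then (p.coeff k : ℂ) * (R : ℂ) ^ k * (m : ℂ) else 0) := by
                apply Finset.sum_congr rfl
                intro k _
                split_ifs <;> simp
            _ = (m : ℂ) * (p.coeff j : ℂ) * (R : ℂ) ^ j := by
                rw [Finset.sum_ite_eq' (range (d + 1)) j
                  (fun k => (p.coeff k : ℂ) * (R : ℂ) ^ k * (m : ℂ))]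
                by_cases hjd : j ∈ range (d + 1)
                · rw [if_pos hjd]; ring
                · rw [if_neg hjd]
                  have hjd' : d < j := by
                    by_contra h
                    exact hjd (Finset.mem_range.mpr (by omega))
                  have hcj : p.coeff j = 0 :=
                    Polynomial.coeff_eq_zero_of_natDegree_lt (by simpa [hd] using hjd')
                  rw [hcj]
                  simp
  -- now the inequality
  have hMnn : 0 ≤ M := by
    refine le_trans (AbsoluteValue.nonneg Complex.abs _) (hM (R : ℂ) ?_)
    rw [Complex.abs_ofReal, abs_of_pos hR]
  have hbig : Complex.abs ((m : ℂ) * (p.coeff j : ℂ) * (R : ℂ) ^ j) ≤ m * M := by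
    rw [← key]
    refine le_trans (Complex.abs.sum_le _ _) ?_
    have hterm : ∀ l ∈ range m,
        Complex.abs ((Polynomial.aeval ((R : ℂ) * ζ ^ l) p) * ζ ^ (l * (m - j))) ≤ M := by
      intro l _
      rw [map_mul, map_pow, habsζ, one_pow, mul_one]
      apply hM
      rw [map_mul, map_pow, habsζ, one_pow, mul_one, Complex.abs_ofReal, abs_of_pos hR]
    calc ∑ l ∈ range m, Complex.abs ((Polynomial.aeval ((R : ℂ) * ζ ^ l) p) * ζ ^ (l * (m - j)))
        ≤ ∑ _l ∈ range m, M := Finset.sum_le_sum hterm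
      _ = m * M := by rw [Finset.sum_const, Finset.card_range, nsmul_eq_mul]
  have habs2 : Complex.abs ((m : ℂ) * (p.coeff j : ℂ) * (R : ℂ) ^ j)
      = m * (|p.coeff j| * R ^ j) := by
    rw [map_mul, map_mul, map_pow, Complex.abs_ofReal, Complex.abs_ofReal,
      Complex.abs_natCast, abs_of_pos hR]
    ring
  rw [habs2] at hbig
  have hmpos : (0 : ℝ) < m := by positivity
  exact le_of_mul_le_mul_left hbig hmpos

/-- In the indeterminate case, the Taylor coefficients of the kernel
`K(z,w) = ∑_n P_n(z)P_n(w)` are `a_{j,k} = ∑_n b_{j,n} b_{k,n}` (absolutely convergent),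
i.e. `A = B B^*`. -/
theorem kernel_coefficients_eq_BBstar
    (μ : Measure ℝ)
    (hmom : ∀ n : ℕ, Integrable (fun x => x ^ n) μ)
    (hsupp : ∀ p : Polynomial ℝ, p ≠ 0 → 0 < ∫ x, (p.eval x) ^ 2 ∂μ)
    (P : ℕ → Polynomial ℝ)
    (hdeg : ∀ n, (P n).natDegree = n)
    (hlead : ∀ n, 0 < (P n).leadingCoeff)
    (horth : ∀ n m, ∫ x, (P n).eval x * (P m).eval x ∂μ = if n = m then 1 else 0)
    (hindet : ∀ z : ℂ, Summable fun n => ‖Polynomial.aeval z (P n)‖ ^ 2)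
    (a : ℕ → ℕ → ℝ)
    (ha : ∀ j k, a j k = ∑' n : ℕ, (P n).coeff j * (P n).coeff k) :
    (∀ j k : ℕ, Summable fun n : ℕ => |(P n).coeff j * (P n).coeff k|) ∧
      ∀ z w : ℂ,
        HasSum (fun p : ℕ × ℕ => (a p.1 p.2 : ℂ) * z ^ p.1 * w ^ p.2)
          (∑' n : ℕ, Polynomial.aeval z (P n) * Polynomial.aeval w (P n)) := by
  have hint : ∀ p : Polynomial ℝ, Integrable (fun x => p.eval x) μ := fun p => by
    have h : (fun x => p.eval x) = fun x => ∑ i ∈ range (p.natDegree + 1), p.coeff i * x ^ i := by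
      funext x; exact Polynomial.eval_eq_sum_range x
    rw [h]
    exact integrable_finset_sum _ (fun i _ => (hmom i).const_mul _)
  have hintmul : ∀ p q : Polynomial ℝ, Integrable (fun x => p.eval x * q.eval x) μ := by
    intro p q
    have := hint (p * q)
    simpa [Polynomial.eval_mul] using this
  -- expansion in the orthonormal basis
  have hexp : ∀ (N : ℕ) (p : Polynomial ℝ), p.natDegree ≤ N →
      p = ∑ m ∈ range (N + 1), (∫ x, p.eval x * (P m).eval x ∂μ) • P m := by
    intro N p hp
    obtain ⟨c, hc⟩ := span_lemma P hdeg (fun n => ne_of_gt (hlead n)) N p hp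
    have hco : ∀ m ∈ range (N + 1), (∫ x, p.eval x * (P m).eval x ∂μ) = c m := by
      intro m hm
      rw [hc]
      have hev : (fun x => (∑ k ∈ range (N + 1), c k • P k).eval x * (P m).eval x)
          = fun x => ∑ k ∈ range (N + 1), c k * ((P k).eval x * (P m).eval x) := by
        funext x
        rw [Polynomial.eval_finset_sum, Finset.sum_mul]
        apply Finset.sum_congr rfl
        intro k _
        simp only [Polynomial.eval_smul, smul_eq_mul]
        ring
      rw [hev, MeasureTheory.integral_finset_sum _
        (fun k _ => ((hintmul (P k) (P m)).const_mul (c k)))]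
      have : ∀ k ∈ range (N + 1),
          (∫ x, c k * ((P k).eval x * (P m).eval x) ∂μ) = if k = m then c k else 0 := by
        intro k _
        rw [MeasureTheory.integral_const_mul, horth k m]
        split_ifs <;> simp
      rw [Finset.sum_congr rfl this, Finset.sum_ite_eq' (range (N + 1)) m c, if_pos hm]
    calc p = ∑ m ∈ range (N + 1), c m • P m := hc
      _ = ∑ m ∈ range (N + 1), (∫ x, p.eval x * (P m).eval x ∂μ) • P m := by
          exact (Finset.sum_congr rfl (fun m hm => by rw [hco m hm])).symm
  -- orthogonality to lower degrees
  have hperp : ∀ (n : ℕ) (p : Polynomial ℝ), p.natDegree < n →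
      ∫ x, p.eval x * (P n).eval x ∂μ = 0 := by
    intro n p hpn
    by_cases hp0 : p = 0
    · simp [hp0]
    have := hexp p.natDegree p le_rfl
    nth_rewrite 1 [this]
    have hev : (fun x => (∑ m ∈ range (p.natDegree + 1),
        (∫ y, p.eval y * (P m).eval y ∂μ) • P m).eval x * (P n).eval x)
        = fun x => ∑ m ∈ range (p.natDegree + 1),
          (∫ y, p.eval y * (P m).eval y ∂μ) * ((P m).eval x * (P n).eval x) := by
      funext x
      rw [Polynomial.eval_finset_sum, Finset.sum_mul]
      apply Finset.sum_congr rfl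
      intro k _
      simp only [Polynomial.eval_smul, smul_eq_mul]
      ring
    rw [hev, MeasureTheory.integral_finset_sum _
      (fun k _ => ((hintmul (P k) (P n)).const_mul _))]
    apply Finset.sum_eq_zero
    intro m hm
    rw [MeasureTheory.integral_const_mul, horth m n,
      if_neg (by have := Finset.mem_range.mp hm; omega), mul_zero]
  -- three-term recurrence
  set A : ℕ → ℝ := fun n => ∫ x, (X * P n).eval x * (P (n + 1)).eval x ∂μ with hA
  set B : ℕ → ℝ := fun n => ∫ x, (X * P n).eval x * (P n).eval x ∂μ with hB
  have hXdeg : ∀ n : ℕ, (X * P n).natDegree ≤ n + 1 := by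
    intro n
    refine le_trans (Polynomial.natDegree_mul_le) ?_
    rw [Polynomial.natDegree_X, hdeg n]
    omega
  have hcomm : ∀ p q : Polynomial ℝ, (∫ x, (X * p).eval x * q.eval x ∂μ)
      = ∫ x, (X * q).eval x * p.eval x ∂μ := by
    intro p q
    apply MeasureTheory.integral_congr_ae
    filter_upwards with x
    simp only [Polynomial.eval_mul, Polynomial.eval_X]
    ring
  have hrec0 : X * P 0 = A 0 • P 1 + B 0 • P 0 := by
    have h := hexp 1 (X * P 0) (hXdeg 0)
    rw [h]
    rw [show (1:ℕ) + 1 = 2 from rfl, Finset.sum_range_succ, Finset.sum_range_one]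
    rw [hA, hB]
    ring
  have hrecS : ∀ n, X * P (n + 1) = A (n + 1) • P (n + 2) + B (n + 1) • P (n + 1) + A n • P n := by
    intro n
    have h := hexp (n + 2) (X * P (n + 1)) (hXdeg (n + 1))
    rw [h, Finset.sum_range_succ, Finset.sum_range_succ, Finset.sum_range_succ]
    have hzero : ∑ m ∈ range n, (∫ x, (X * P (n + 1)).eval x * (P m).eval x ∂μ) • P m = 0 := by
      apply Finset.sum_eq_zero
      intro m hm
      have hm' := Finset.mem_range.mp hm
      rw [hcomm (P (n + 1)) (P m), hperp (n + 1) (X * P m) (by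
        have := hXdeg m; omega)]
      simp
    rw [hzero, zero_add]
    have hAn : (∫ x, (X * P (n + 1)).eval x * (P n).eval x ∂μ) = A n := by
      rw [hcomm (P (n + 1)) (P n), hA]
    rw [hAn, hA, hB]
    ring
  have hAval : ∀ n, A n * (P (n + 1)).leadingCoeff = (P n).leadingCoeff := by
    intro n
    have hlc : ∀ k, (P k).coeff k = (P k).leadingCoeff := by
      intro k
      rw [Polynomial.leadingCoeff, hdeg k]
    match n with
    | 0 =>
      have h := congrArg (fun p => p.coeff 1) hrec0
      simp only [Polynomial.coeff_add, Polynomial.coeff_smul, smul_eq_mul] at h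
      rw [Polynomial.coeff_X_mul] at h
      rw [hlc 0, hlc 1] at h
      have h0 : (P 0).coeff 1 = 0 :=
        Polynomial.coeff_eq_zero_of_natDegree_lt (by rw [hdeg]; omega)
      rw [h0, mul_zero, add_zero] at h
      exact h.symm
    | Nat.succ n =>
      have h := congrArg (fun p => p.coeff (n + 2)) (hrecS n)
      simp only [Polynomial.coeff_add, Polynomial.coeff_smul, smul_eq_mul] at h
      rw [Polynomial.coeff_X_mul] at h
      rw [hlc (n + 1), hlc (n + 2)] at h
      have h1 : (P (n + 1)).coeff (n + 2) = 0 :=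
        Polynomial.coeff_eq_zero_of_natDegree_lt (by rw [hdeg]; omega)
      have h2 : (P n).coeff (n + 2) = 0 :=
        Polynomial.coeff_eq_zero_of_natDegree_lt (by rw [hdeg]; omega)
      rw [h1, h2, mul_zero, mul_zero, add_zero, add_zero] at h
      exact h.symm
  have hApos : ∀ n, 0 < A n := by
    intro n
    have h := hAval n
    nlinarith [hlead n, hlead (n + 1)]
  -- measure facts
  have hμ1 : Integrable (fun _ : ℝ => (1:ℝ)) μ := by simpa using hmom 0
  set m0 : ℝ := ∫ _, (1:ℝ) ∂μ with hm0
  set c0 : ℝ := (P 0).leadingCoeff with hc0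
  have hc0pos : 0 < c0 := hlead 0
  have hP0 : P 0 = Polynomial.C c0 := by
    have h := Polynomial.eq_C_of_natDegree_le_zero (le_of_eq (hdeg 0))
    rw [h]
    congr 1
    rw [hc0, Polynomial.leadingCoeff, hdeg 0]
  have hm0eq : m0 = (μ Set.univ).toReal := by
    rw [hm0, MeasureTheory.integral_const, smul_eq_mul, mul_one, MeasureTheory.measureReal_def]
  have hc0m0 : c0 ^ 2 * m0 = 1 := by
    have h00 := horth 0 0
    rw [if_pos rfl, hP0] at h00
    simp only [Polynomial.eval_C, MeasureTheory.integral_const, smul_eq_mul, MeasureTheory.measureReal_def] at h00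
    rw [hm0eq]
    nlinarith [h00]
  have hm0pos : 0 < m0 := by nlinarith [hc0m0, sq_nonneg c0]
  have hintP : ∀ n, (∫ x, (P n).eval x ∂μ) = if n = 0 then 1 / c0 else 0 := by
    intro n
    match n with
    | 0 =>
      rw [if_pos rfl, hP0]
      simp only [Polynomial.eval_C, MeasureTheory.integral_const, smul_eq_mul, MeasureTheory.measureReal_def]
      rw [← hm0eq]
      field_simp
      nlinarith [hc0m0]
    | Nat.succ n =>
      rw [if_neg (Nat.succ_ne_zero n)]
      have h := hperp (n + 1) (Polynomial.C 1) (by rw [Polynomial.natDegree_C]; omega)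
      simpa using h
  -- weights
  set g1 : ℝ → ℝ := fun x => x / (1 + x ^ 2) with hg1
  set g2 : ℝ → ℝ := fun x => 1 / (1 + x ^ 2) with hg2
  have hden : ∀ x : ℝ, (0:ℝ) < 1 + x ^ 2 := fun x => by positivity
  have hg1b : ∀ x, |g1 x| ≤ 1 := by
    intro x
    rw [hg1, abs_div, abs_of_pos (hden x), div_le_one (hden x)]
    nlinarith [abs_nonneg x, sq_abs x, sq_nonneg (|x| - 1)]
  have hg2b : ∀ x, |g2 x| ≤ 1 := by
    intro x
    rw [hg2, abs_div, abs_of_pos (hden x), div_le_one (hden x)]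
    simp
    nlinarith [sq_nonneg x]
  have hg1c : Continuous g1 := by
    rw [hg1]
    exact continuous_id.div (continuous_const.add (continuous_pow 2)) (fun x => ne_of_gt (hden x))
  have hg2c : Continuous g2 := by
    rw [hg2]
    exact continuous_const.div (continuous_const.add (continuous_pow 2)) (fun x => ne_of_gt (hden x))
  -- integrability against bounded weights
  have hintg : ∀ (p : Polynomial ℝ) (u : ℝ → ℝ), Continuous u → (∀ x, |u x| ≤ 1) →
      Integrable (fun x => p.eval x * u x) μ := by
    intro p u hu hub
    refine MeasureTheory.Integrable.mono' (hint p).abs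
      ((p.continuous_aeval.mul hu).aestronglyMeasurable) ?_
    filter_upwards with x
    rw [Real.norm_eq_abs, abs_mul]
    calc |p.eval x| * |u x| ≤ |p.eval x| * 1 :=
          mul_le_mul_of_nonneg_left (hub x) (abs_nonneg _)
      _ = |p.eval x| := mul_one _
  -- Bessel inequality
  have hbes : ∀ u : ℝ → ℝ, Continuous u → (∀ x, |u x| ≤ 1) →
      Summable (fun n => (∫ x, (P n).eval x * u x ∂μ) ^ 2) := by
    intro u hu hub
    apply summable_of_sum_range_le (c := m0) (fun n => sq_nonneg _)
    intro N
    set cs : ℕ → ℝ := fun n => ∫ x, (P n).eval x * u x ∂μ with hcs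
    set s : ℝ → ℝ := fun x => ∑ n ∈ range N, cs n * (P n).eval x with hs
    have hu2 : Integrable (fun x => u x ^ 2) μ := by
      refine MeasureTheory.Integrable.mono' hμ1 ((hu.pow 2).aestronglyMeasurable) ?_
      filter_upwards with x
      rw [Real.norm_eq_abs, abs_pow]
      have := hub x
      nlinarith [abs_nonneg (u x)]
    have hPu : ∀ p : Polynomial ℝ, Integrable (fun x => p.eval x * u x) μ :=
      fun p => hintg p u hu hub
    have heq1 : (fun x => u x * s x)
        = fun x => ∑ n ∈ range N, cs n * ((P n).eval x * u x) := by
      funext x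
      rw [hs]
      simp only
      rw [Finset.mul_sum]
      apply Finset.sum_congr rfl
      intro n _
      ring
    have heq2 : (fun x => s x ^ 2) = fun x => ∑ n ∈ range N, ∑ m ∈ range N,
        (cs n * cs m) * ((P n).eval x * (P m).eval x) := by
      funext x
      rw [hs]
      simp only
      rw [sq, Finset.sum_mul_sum]
      apply Finset.sum_congr rfl
      intro n _
      apply Finset.sum_congr rfl
      intro m _
      ring
    have hsint2 : Integrable (fun x => u x * s x) μ := by
      rw [heq1]
      exact integrable_finset_sum _ (fun n _ => (hPu (P n)).const_mul _)
    have hs2int : Integrable (fun x => s x ^ 2) μ := by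
      rw [heq2]
      exact integrable_finset_sum _ (fun n _ => integrable_finset_sum _
        (fun m _ => (hintmul (P n) (P m)).const_mul _))
    have hus : ∫ x, u x * s x ∂μ = ∑ n ∈ range N, cs n ^ 2 := by
      rw [heq1, MeasureTheory.integral_finset_sum _
        (fun n _ => (hPu (P n)).const_mul _)]
      apply Finset.sum_congr rfl
      intro n _
      rw [MeasureTheory.integral_const_mul, sq, hcs]
    have hs2 : ∫ x, s x ^ 2 ∂μ = ∑ n ∈ range N, cs n ^ 2 := by
      rw [heq2, MeasureTheory.integral_finset_sum _
        (fun n _ => integrable_finset_sum _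
          (fun m _ => (hintmul (P n) (P m)).const_mul _))]
      have hin : ∀ n ∈ range N, ∑ m ∈ range N,
          (∫ x, (cs n * cs m) * ((P n).eval x * (P m).eval x) ∂μ) = cs n ^ 2 := by
        intro n hn
        have : ∀ m ∈ range N, (∫ x, (cs n * cs m) * ((P n).eval x * (P m).eval x) ∂μ)
            = if m = n then cs n ^ 2 else 0 := by
          intro m _
          rw [MeasureTheory.integral_const_mul, horth n m]
          by_cases hmn : m = n
          · rw [if_pos hmn, hmn, if_pos rfl, mul_one, sq]
          · rw [if_neg hmn, if_neg (fun h => hmn h.symm), mul_zero]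
        rw [Finset.sum_congr rfl this, Finset.sum_ite_eq' (range N) n (fun _ => cs n ^ 2),
          if_pos hn]
      apply Finset.sum_congr rfl
      intro n hn
      rw [MeasureTheory.integral_finset_sum _
        (fun m _ => (hintmul (P n) (P m)).const_mul _)]
      exact hin n hn
    have hnn : 0 ≤ ∫ x, (u x - s x) ^ 2 ∂μ :=
      MeasureTheory.integral_nonneg (fun x => sq_nonneg _)
    have hexp2 : ∫ x, (u x - s x) ^ 2 ∂μ
        = ∫ x, u x ^ 2 ∂μ - 2 * ∫ x, u x * s x ∂μ + ∫ x, s x ^ 2 ∂μ := by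
      have hpt : (fun x => (u x - s x) ^ 2)
          = fun x => (u x ^ 2 - 2 * (u x * s x)) + s x ^ 2 := by
        funext x; ring
      have e1 : ∫ x, ((u x ^ 2 - 2 * (u x * s x)) + s x ^ 2) ∂μ
          = (∫ x, (u x ^ 2 - 2 * (u x * s x)) ∂μ) + ∫ x, s x ^ 2 ∂μ :=
        MeasureTheory.integral_add (hu2.sub (hsint2.const_mul 2)) hs2int
      have e2 : ∫ x, (u x ^ 2 - 2 * (u x * s x)) ∂μ
          = (∫ x, u x ^ 2 ∂μ) - ∫ x, 2 * (u x * s x) ∂μ :=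
        MeasureTheory.integral_sub hu2 (hsint2.const_mul 2)
      have e3 : ∫ x, 2 * (u x * s x) ∂μ = 2 * ∫ x, u x * s x ∂μ :=
        MeasureTheory.integral_const_mul 2 _
      rw [hpt, e1, e2, e3]
    rw [hexp2, hus, hs2] at hnn
    have hu2le : ∫ x, u x ^ 2 ∂μ ≤ m0 := by
      rw [hm0]
      apply MeasureTheory.integral_mono hu2 hμ1
      intro x
      show u x ^ 2 ≤ 1
      have h1 := hub x
      nlinarith [abs_mul_abs_self (u x), abs_nonneg (u x)]
    show ∑ n ∈ range N, cs n ^ 2 ≤ m0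
    linarith

  -- complex sequences and recurrences
  have haeval_smul : ∀ (z : ℂ) (r : ℝ) (p : Polynomial ℝ),
      Polynomial.aeval z (r • p) = (r : ℂ) * Polynomial.aeval z p := by
    intro z r p
    rw [_root_.map_smul, Complex.real_smul]
  have hpc0 : ∀ z : ℂ, Polynomial.aeval z (P 0) = (c0 : ℂ) := by
    intro z
    rw [hP0, Polynomial.aeval_C]
    rfl
  have hpcrec0 : ∀ z : ℂ, z * Polynomial.aeval z (P 0)
      = (A 0 : ℂ) * Polynomial.aeval z (P 1) + (B 0 : ℂ) * Polynomial.aeval z (P 0) := by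
    intro z
    have h := congrArg (Polynomial.aeval z) hrec0
    rw [map_mul, Polynomial.aeval_X, map_add, haeval_smul, haeval_smul] at h
    exact h
  have hpcrecS : ∀ (z : ℂ) (n : ℕ), z * Polynomial.aeval z (P (n + 1))
      = (A (n + 1) : ℂ) * Polynomial.aeval z (P (n + 2))
        + (B (n + 1) : ℂ) * Polynomial.aeval z (P (n + 1))
        + (A n : ℂ) * Polynomial.aeval z (P n) := by
    intro z n
    have h := congrArg (Polynomial.aeval z) (hrecS n)
    rw [map_mul, Polynomial.aeval_X, map_add, map_add, haeval_smul, haeval_smul,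
      haeval_smul] at h
    exact h
  -- weighted recurrences
  set q1 : ℕ → ℝ := fun n => ∫ x, (P n).eval x * g1 x ∂μ with hq1
  set q2 : ℕ → ℝ := fun n => ∫ x, (P n).eval x * g2 x ∂μ with hq2
  have hJ3 : ∀ (u : ℝ → ℝ), Continuous u → (∀ x, |u x| ≤ 1) →
      ∀ (a b c : ℝ) (p q r : Polynomial ℝ),
      ∫ x, (a • p + b • q + c • r).eval x * u x ∂μ
        = a * (∫ x, p.eval x * u x ∂μ) + b * (∫ x, q.eval x * u x ∂μ)
          + c * (∫ x, r.eval x * u x ∂μ) := by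
    intro u hu hub a b c p q r
    have hpt : (fun x => (a • p + b • q + c • r).eval x * u x)
        = fun x => a * (p.eval x * u x) + b * (q.eval x * u x) + c * (r.eval x * u x) := by
      funext x
      simp only [Polynomial.eval_add, Polynomial.eval_smul, smul_eq_mul]
      ring
    have i1 : Integrable (fun x => a * (p.eval x * u x)) μ := (hintg p u hu hub).const_mul a
    have i2 : Integrable (fun x => b * (q.eval x * u x)) μ := (hintg q u hu hub).const_mul b
    have i3 : Integrable (fun x => c * (r.eval x * u x)) μ := (hintg r u hu hub).const_mul c
    have i12 : Integrable (fun x => a * (p.eval x * u x) + b * (q.eval x * u x)) μ := i1.add i2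
    rw [hpt, MeasureTheory.integral_add i12 i3, MeasureTheory.integral_add i1 i2,
      MeasureTheory.integral_const_mul, MeasureTheory.integral_const_mul,
      MeasureTheory.integral_const_mul]
  have hJ2 : ∀ (u : ℝ → ℝ), Continuous u → (∀ x, |u x| ≤ 1) →
      ∀ (a b : ℝ) (p q : Polynomial ℝ),
      ∫ x, (a • p + b • q).eval x * u x ∂μ
        = a * (∫ x, p.eval x * u x ∂μ) + b * (∫ x, q.eval x * u x ∂μ) := by
    intro u hu hub a b p q
    have hpt : (fun x => (a • p + b • q).eval x * u x)
        = fun x => a * (p.eval x * u x) + b * (q.eval x * u x) := by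
      funext x
      simp only [Polynomial.eval_add, Polynomial.eval_smul, smul_eq_mul]
      ring
    have i1 : Integrable (fun x => a * (p.eval x * u x)) μ := (hintg p u hu hub).const_mul a
    have i2 : Integrable (fun x => b * (q.eval x * u x)) μ := (hintg q u hu hub).const_mul b
    rw [hpt, MeasureTheory.integral_add i1 i2,
      MeasureTheory.integral_const_mul, MeasureTheory.integral_const_mul]
  have hXu : ∀ (u : ℝ → ℝ) (n : ℕ),
      (∫ x, (X * P n).eval x * u x ∂μ) = ∫ x, (P n).eval x * (x * u x) ∂μ := by
    intro u n
    apply MeasureTheory.integral_congr_ae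
    filter_upwards with x
    simp only [Polynomial.eval_mul, Polynomial.eval_X]
    ring
  have hxg1 : ∀ x : ℝ, x * g1 x = 1 - g2 x := by
    intro x
    rw [hg1, hg2]
    simp only
    field_simp
    ring
  have hxg2 : ∀ x : ℝ, x * g2 x = g1 x := by
    intro x
    rw [hg1, hg2]
    simp only
    field_simp
  have hPg1 : ∀ n, (∫ x, (P n).eval x * (x * g1 x) ∂μ)
      = (if n = 0 then 1 / c0 else 0) - q2 n := by
    intro n
    have hpt : (fun x => (P n).eval x * (x * g1 x))
        = fun x => (P n).eval x - (P n).eval x * g2 x := by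
      funext x
      rw [hxg1 x]
      ring
    rw [hpt, MeasureTheory.integral_sub (hint (P n)) (hintg (P n) g2 hg2c hg2b),
      hintP n, hq2]
  have hPg2 : ∀ n, (∫ x, (P n).eval x * (x * g2 x) ∂μ) = q1 n := by
    intro n
    have hpt : (fun x => (P n).eval x * (x * g2 x)) = fun x => (P n).eval x * g1 x := by
      funext x
      rw [hxg2 x]
    rw [hpt, hq1]
  have hq1rec0 : A 0 * q1 1 + B 0 * q1 0 = 1 / c0 - q2 0 := by
    have h := congrArg (fun p => ∫ x, p.eval x * g1 x ∂μ) hrec0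
    rw [hXu g1 0, hJ2 g1 hg1c hg1b, hPg1 0, if_pos rfl] at h
    exact h.symm
  have hq1recS : ∀ n, A (n + 1) * q1 (n + 2) + B (n + 1) * q1 (n + 1) + A n * q1 n
      = -q2 (n + 1) := by
    intro n
    have h := congrArg (fun p => ∫ x, p.eval x * g1 x ∂μ) (hrecS n)
    rw [hXu g1 (n + 1), hJ3 g1 hg1c hg1b, hPg1 (n + 1), if_neg (Nat.succ_ne_zero n),
      zero_sub] at h
    exact h.symm
  have hq2rec0 : A 0 * q2 1 + B 0 * q2 0 = q1 0 := by
    have h := congrArg (fun p => ∫ x, p.eval x * g2 x ∂μ) hrec0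
    rw [hXu g2 0, hJ2 g2 hg2c hg2b, hPg2 0] at h
    exact h.symm
  have hq2recS : ∀ n, A (n + 1) * q2 (n + 2) + B (n + 1) * q2 (n + 1) + A n * q2 n
      = q1 (n + 1) := by
    intro n
    have h := congrArg (fun p => ∫ x, p.eval x * g2 x ∂μ) (hrecS n)
    rw [hXu g2 (n + 1), hJ3 g2 hg2c hg2b, hPg2 (n + 1)] at h
    exact h.symm
  -- complex second solution
  set qc : ℕ → ℂ := fun n => (q1 n : ℂ) + (q2 n : ℂ) * Complex.I with hqcdef
  set pii : ℕ → ℂ := fun n => Polynomial.aeval Complex.I (P n) with hpiidef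
  have hc0ne : (c0 : ℂ) ≠ 0 := Complex.ofReal_ne_zero.mpr (ne_of_gt hc0pos)
  have hAne : ∀ n, (A n : ℂ) ≠ 0 := fun n => Complex.ofReal_ne_zero.mpr (ne_of_gt (hApos n))
  have hqcrec0 : (A 0 : ℂ) * qc 1 + (B 0 : ℂ) * qc 0
      = Complex.I * qc 0 + 1 / (c0 : ℂ) := by
    have e1 := congrArg (fun r : ℝ => (r : ℂ)) hq1rec0
    have e2 := congrArg (fun r : ℝ => (r : ℂ)) hq2rec0
    push_cast at e1 e2
    rw [hqcdef]
    dsimp only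
    linear_combination e1 + Complex.I * e2 + (-(q2 0 : ℂ)) * Complex.I_sq
  have hqcrecS : ∀ n, (A (n + 1) : ℂ) * qc (n + 2) + (B (n + 1) : ℂ) * qc (n + 1)
      + (A n : ℂ) * qc n = Complex.I * qc (n + 1) := by
    intro n
    have e1 := congrArg (fun r : ℝ => (r : ℂ)) (hq1recS n)
    have e2 := congrArg (fun r : ℝ => (r : ℂ)) (hq2recS n)
    push_cast at e1 e2
    rw [hqcdef]
    dsimp only
    linear_combination e1 + Complex.I * e2 + (-(q2 (n + 1) : ℂ)) * Complex.I_sq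
  -- Wronskian
  have hW : ∀ n, (A n : ℂ) * (pii (n + 1) * qc n - pii n * qc (n + 1)) = -1 := by
    intro n
    induction n with
    | zero =>
      have e1 := hpcrec0 Complex.I
      have e2 := hqcrec0
      have e3 : pii 0 = (c0 : ℂ) := hpc0 Complex.I
      have he : (c0 : ℂ) * (1 / (c0 : ℂ)) = 1 := mul_one_div_cancel hc0ne
      linear_combination (-(qc 0)) * e1 + (-(pii 0)) * e2 + (-(1 / (c0:ℂ))) * e3 + (-1 : ℂ) * he
    | succ n ih =>
      have e1 := hpcrecS Complex.I n
      have e2 := hqcrecS n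
      linear_combination (-(qc (n + 1))) * e1 + (-(pii (n + 1))) * e2 + ih
  -- variation of constants
  have hVOC : ∀ (z : ℂ) (n : ℕ), Polynomial.aeval z (P n)
      = pii n * (1 - (z - Complex.I) * ∑ m ∈ range n, qc m * Polynomial.aeval z (P m))
        + qc n * ((z - Complex.I) * ∑ m ∈ range n, pii m * Polynomial.aeval z (P m)) := by
    intro z
    set sv : ℕ → ℂ := fun n => Polynomial.aeval z (P n) with hsv
    set SA : ℕ → ℂ := fun n => 1 - (z - Complex.I) * ∑ m ∈ range n, qc m * sv m with hSA
    set SB : ℕ → ℂ := fun n => (z - Complex.I) * ∑ m ∈ range n, pii m * sv m with hSB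
    have hSAstep : ∀ k, SA (k + 1) = SA k - (z - Complex.I) * (qc k * sv k) := by
      intro k
      rw [hSA]
      dsimp only
      rw [Finset.sum_range_succ]
      ring
    have hSBstep : ∀ k, SB (k + 1) = SB k + (z - Complex.I) * (pii k * sv k) := by
      intro k
      rw [hSB]
      dsimp only
      rw [Finset.sum_range_succ]
      ring
    suffices h : ∀ n, sv n = pii n * SA n + qc n * SB n by
      intro n
      exact h n
    have hpair : ∀ n, sv n = pii n * SA n + qc n * SB n
        ∧ sv (n + 1) = pii (n + 1) * SA (n + 1) + qc (n + 1) * SB (n + 1) := by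
      intro n
      induction n with
      | zero =>
        constructor
        · have h0 : sv 0 = (c0 : ℂ) := hpc0 z
          have h0' : pii 0 = (c0 : ℂ) := hpc0 Complex.I
          rw [h0, h0', hSA, hSB]
          simp
        · -- C 1
          apply mul_left_cancel₀ (hAne 0)
          have f1 := hpcrec0 z
          have f2 := hpcrec0 Complex.I
          have f3 := hqcrec0
          have f4 : sv 0 = (c0 : ℂ) := hpc0 z
          have f5 : pii 0 = (c0 : ℂ) := hpc0 Complex.I
          have he : (c0 : ℂ) * (1 / (c0 : ℂ)) = 1 := mul_one_div_cancel hc0ne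
          rw [hSAstep 0, hSBstep 0]
          have hSA0 : SA 0 = 1 := by rw [hSA]; simp
          have hSB0 : SB 0 = 0 := by rw [hSB]; simp
          rw [hSA0, hSB0]
          linear_combination (-1 : ℂ) * f1 + (1 - (z - Complex.I) * (qc 0 * sv 0)) * f2
            - (z - Complex.I) * (pii 0 * sv 0) * f3
            + (z - (B 0 : ℂ) + (z - Complex.I) * qc 0 * (c0:ℂ) * (Complex.I - (B 0:ℂ))
              - (z - Complex.I) * (c0:ℂ) * (Complex.I * qc 0 + 1/(c0:ℂ) - (B 0:ℂ) * qc 0)) * f4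
            + (-(1 - (z - Complex.I) * (qc 0 * sv 0)) * (Complex.I - (B 0:ℂ))
              - (z - Complex.I) * sv 0 * (Complex.I * qc 0 + 1/(c0:ℂ) - (B 0:ℂ) * qc 0)) * f5
            - (z - Complex.I) * (c0:ℂ) * he
      | succ n ihp =>
        obtain ⟨ihn, ihn1⟩ := ihp
        refine ⟨ihn1, ?_⟩
        apply mul_left_cancel₀ (hAne (n + 1))
        have E1 := hpcrecS z n
        have E2 := hpcrecS Complex.I n
        have E3 := hqcrecS n
        have W := hW n
        have k1 : pii (n + 1) * SA (n + 2) + qc (n + 1) * SB (n + 2) = sv (n + 1) := by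
          rw [hSAstep (n + 1), hSBstep (n + 1)]
          linear_combination -ihn1
        have k2 : pii n * SA (n + 2) + qc n * SB (n + 2)
            = sv n + (z - Complex.I) * sv (n + 1)
              * (pii (n + 1) * qc n - pii n * qc (n + 1)) := by
          rw [hSAstep (n + 1), hSBstep (n + 1), hSAstep n, hSBstep n]
          linear_combination -ihn
        have k3 : (A n : ℂ) * (pii n * SA (n + 2) + qc n * SB (n + 2))
            = (A n : ℂ) * sv n - (z - Complex.I) * sv (n + 1) := by
          linear_combination (A n : ℂ) * k2 + (z - Complex.I) * sv (n + 1) * W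
        linear_combination SA (n + 2) * E2 - SB (n + 2) * E3
          - (Complex.I - (B (n + 1) : ℂ)) * k1 + k3 - E1
    intro n
    exact (hpair n).1
  -- the ℓ² majorant sequence
  set hs : ℕ → ℝ := fun n => Complex.abs (pii n) + Complex.abs (qc n) with hhs
  have hsnn : ∀ n, 0 ≤ hs n := fun n =>
    add_nonneg (AbsoluteValue.nonneg _ _) (AbsoluteValue.nonneg _ _)
  have hsumsq : Summable (fun n => hs n ^ 2) := by
    have h1 : Summable (fun n => Complex.abs (pii n) ^ 2) := hindet Complex.I
    have h2 : Summable (fun n => Complex.abs (qc n) ^ 2) := by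
      have hq : ∀ n, q1 n ^ 2 + q2 n ^ 2 = Complex.abs (qc n) ^ 2 := by
        intro n
        rw [hqcdef]
        dsimp only
        rw [Complex.sq_abs, Complex.normSq_add_mul_I]
      exact ((hbes g1 hg1c hg1b).add (hbes g2 hg2c hg2b)).congr hq
    apply Summable.of_nonneg_of_le (fun n => sq_nonneg _) (fun n => ?_)
      (((h1.add h2)).mul_left 2)
    rw [hhs]
    dsimp only
    nlinarith [sq_nonneg (Complex.abs (pii n) - Complex.abs (qc n))]
  set Hc : ℝ := ∑' n, hs n ^ 2 with hHcdef
  have hHnn : 0 ≤ Hc := tsum_nonneg (fun n => sq_nonneg _)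
  have hpartial : ∀ n, ∑ m ∈ range n, hs m ^ 2 ≤ Hc := fun n =>
    Summable.sum_le_tsum (range n) (fun m _ => sq_nonneg _) hsumsq
  -- key locally uniform estimate
  have hkey : ∀ (z : ℂ) (n : ℕ), Complex.abs (Polynomial.aeval z (P n))
      ≤ hs n * Real.exp (Complex.abs (z - Complex.I) * Hc) := by
    intro z
    have hrec : ∀ n, Complex.abs (Polynomial.aeval z (P n))
        ≤ hs n * (1 + Complex.abs (z - Complex.I)
          * ∑ m ∈ range n, hs m * Complex.abs (Polynomial.aeval z (P m))) := by
      intro n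
      set c : ℝ := Complex.abs (z - Complex.I) with hc
      set σ : ℝ := ∑ m ∈ range n, hs m * Complex.abs (Polynomial.aeval z (P m)) with hσ
      have hσnn : 0 ≤ σ := Finset.sum_nonneg fun m _ =>
        mul_nonneg (hsnn m) (AbsoluteValue.nonneg _ _)
      have hcnn : 0 ≤ c := AbsoluteValue.nonneg _ _
      have hS1 : Complex.abs (∑ m ∈ range n, qc m * Polynomial.aeval z (P m)) ≤ σ := by
        refine le_trans (Complex.abs.sum_le _ _) ?_
        rw [hσ]
        apply Finset.sum_le_sum
        intro m _
        rw [map_mul]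
        apply mul_le_mul_of_nonneg_right _ (AbsoluteValue.nonneg _ _)
        rw [hhs]
        dsimp only
        exact le_add_of_nonneg_left (AbsoluteValue.nonneg _ _)
      have hS2 : Complex.abs (∑ m ∈ range n, pii m * Polynomial.aeval z (P m)) ≤ σ := by
        refine le_trans (Complex.abs.sum_le _ _) ?_
        rw [hσ]
        apply Finset.sum_le_sum
        intro m _
        rw [map_mul]
        apply mul_le_mul_of_nonneg_right _ (AbsoluteValue.nonneg _ _)
        rw [hhs]
        dsimp only
        exact le_add_of_nonneg_right (AbsoluteValue.nonneg _ _)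
      have hSA : Complex.abs (1 - (z - Complex.I)
          * ∑ m ∈ range n, qc m * Polynomial.aeval z (P m)) ≤ 1 + c * σ := by
        have htri := Complex.abs.sub_le 1 0
          ((z - Complex.I) * ∑ m ∈ range n, qc m * Polynomial.aeval z (P m))
        simp only [sub_zero, zero_sub, map_one, map_neg_eq_map] at htri
        refine le_trans htri ?_
        rw [map_mul]
        have := mul_le_mul (le_refl c) hS1 (AbsoluteValue.nonneg _ _) hcnn
        linarith
      have hSB : Complex.abs ((z - Complex.I)
          * ∑ m ∈ range n, pii m * Polynomial.aeval z (P m)) ≤ c * σ := by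
        rw [map_mul]
        exact mul_le_mul (le_refl c) hS2 (AbsoluteValue.nonneg _ _) hcnn
      rw [hVOC z n]
      refine le_trans (Complex.abs.add_le _ _) ?_
      rw [map_mul, map_mul]
      have e1 : Complex.abs (pii n) * Complex.abs (1 - (z - Complex.I)
          * ∑ m ∈ range n, qc m * Polynomial.aeval z (P m))
          ≤ Complex.abs (pii n) * (1 + c * σ) :=
        mul_le_mul_of_nonneg_left hSA (AbsoluteValue.nonneg _ _)
      have e2 : Complex.abs (qc n) * Complex.abs ((z - Complex.I)
          * ∑ m ∈ range n, pii m * Polynomial.aeval z (P m))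
          ≤ Complex.abs (qc n) * (c * σ) :=
        mul_le_mul_of_nonneg_left hSB (AbsoluteValue.nonneg _ _)
      rw [hhs]
      dsimp only
      nlinarith [AbsoluteValue.nonneg Complex.abs (pii n),
        AbsoluteValue.nonneg Complex.abs (qc n), hσnn, hcnn]
    exact gronwall hs (fun n => Complex.abs (Polynomial.aeval z (P n)))
      (Complex.abs (z - Complex.I)) Hc (AbsoluteValue.nonneg _ _) hHnn hsnn
      (fun n => AbsoluteValue.nonneg _ _) hpartial hrec
  -- coefficient bounds
  have hcoeff : ∀ R : ℝ, 0 < R → ∀ j n, |(P n).coeff j| * R ^ j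
      ≤ hs n * Real.exp ((R + 1) * Hc) := by
    intro R hR j n
    apply coeff_bound (P n) hR ?_ j
    intro w hw
    refine le_trans (hkey w n) ?_
    apply mul_le_mul_of_nonneg_left _ (hsnn n)
    apply Real.exp_le_exp.mpr
    apply mul_le_mul_of_nonneg_right _ hHnn
    calc Complex.abs (w - Complex.I) ≤ Complex.abs w + Complex.abs (Complex.I) := by
          have htri := Complex.abs.sub_le w 0 Complex.I
          simpa using htri
      _ = R + 1 := by rw [hw, Complex.abs_I]
  -- Part 1
  have hpart1 : ∀ j k : ℕ, Summable fun n : ℕ => |(P n).coeff j * (P n).coeff k| := by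
    intro j k
    set E : ℝ := Real.exp ((1 + 1) * Hc) with hEdef
    have hEpos : 0 < E := Real.exp_pos _
    apply Summable.of_nonneg_of_le (fun n => abs_nonneg _) (fun n => ?_)
      (hsumsq.mul_left (E * E))
    have h1 := hcoeff 1 one_pos j n
    have h2 := hcoeff 1 one_pos k n
    rw [one_pow, mul_one] at h1 h2
    calc |(P n).coeff j * (P n).coeff k| = |(P n).coeff j| * |(P n).coeff k| := abs_mul _ _
      _ ≤ (hs n * E) * (hs n * E) :=
          mul_le_mul h1 h2 (abs_nonneg _) (mul_nonneg (hsnn n) (le_of_lt hEpos))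
      _ = (E * E) * hs n ^ 2 := by ring
  refine ⟨hpart1, ?_⟩
  intro z w
  set F : (ℕ × ℕ) × ℕ → ℂ := fun x =>
    (((P x.2).coeff x.1.1 * (P x.2).coeff x.1.2 : ℝ) : ℂ) * z ^ x.1.1 * w ^ x.1.2 with hFdef
  set R : ℝ := Complex.abs z + Complex.abs w + 2 with hRdef
  have hRpos : 0 < R := by
    have := AbsoluteValue.nonneg Complex.abs z
    have := AbsoluteValue.nonneg Complex.abs w
    positivity
  set E : ℝ := Real.exp ((R + 1) * Hc) with hEdef
  have hEpos : 0 < E := Real.exp_pos _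
  set rz : ℝ := Complex.abs z / R with hrz
  set rw' : ℝ := Complex.abs w / R with hrw
  have hrznn : 0 ≤ rz := div_nonneg (AbsoluteValue.nonneg _ _) (le_of_lt hRpos)
  have hrwnn : 0 ≤ rw' := div_nonneg (AbsoluteValue.nonneg _ _) (le_of_lt hRpos)
  have hrzlt : rz < 1 := by
    rw [hrz, div_lt_one hRpos, hRdef]
    have := AbsoluteValue.nonneg Complex.abs w
    linarith
  have hrwlt : rw' < 1 := by
    rw [hrw, div_lt_one hRpos, hRdef]
    have := AbsoluteValue.nonneg Complex.abs z
    linarith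
  -- coefficient bound in convenient form
  have hcb : ∀ (j n : ℕ), |(P n).coeff j| * Complex.abs z ^ j ≤ hs n * E * rz ^ j := by
    intro j n
    have h1 := hcoeff R hRpos j n
    have hz : Complex.abs z ^ j = R ^ j * rz ^ j := by
      rw [hrz, div_pow, mul_div_cancel₀]
      exact pow_ne_zero _ (ne_of_gt hRpos)
    calc |(P n).coeff j| * Complex.abs z ^ j = (|(P n).coeff j| * R ^ j) * rz ^ j := by
          rw [hz]; ring
      _ ≤ (hs n * E) * rz ^ j :=
          mul_le_mul_of_nonneg_right h1 (pow_nonneg hrznn j)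
  have hcbw : ∀ (k n : ℕ), |(P n).coeff k| * Complex.abs w ^ k ≤ hs n * E * rw' ^ k := by
    intro k n
    have h1 := hcoeff R hRpos k n
    have hz : Complex.abs w ^ k = R ^ k * rw' ^ k := by
      rw [hrw, div_pow, mul_div_cancel₀]
      exact pow_ne_zero _ (ne_of_gt hRpos)
    calc |(P n).coeff k| * Complex.abs w ^ k = (|(P n).coeff k| * R ^ k) * rw' ^ k := by
          rw [hz]; ring
      _ ≤ (hs n * E) * rw' ^ k :=
          mul_le_mul_of_nonneg_right h1 (pow_nonneg hrwnn k)
  -- norm summability of F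
  have hFnorm : Summable (fun x => ‖F x‖) := by
    have hmaj : Summable (fun x : (ℕ × ℕ) × ℕ =>
        (rz ^ x.1.1 * rw' ^ x.1.2) * ((E * E) * hs x.2 ^ 2)) := by
      have hjk : Summable (fun p : ℕ × ℕ => rz ^ p.1 * rw' ^ p.2) :=
        Summable.mul_of_nonneg (summable_geometric_of_lt_one hrznn hrzlt)
          (summable_geometric_of_lt_one hrwnn hrwlt)
          (fun j => pow_nonneg hrznn j) (fun k => pow_nonneg hrwnn k)
      exact Summable.mul_of_nonneg hjk (hsumsq.mul_left (E * E))
        (fun p => mul_nonneg (pow_nonneg hrznn _) (pow_nonneg hrwnn _))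
        (fun n => mul_nonneg (mul_nonneg (le_of_lt hEpos) (le_of_lt hEpos)) (sq_nonneg _))
    apply Summable.of_nonneg_of_le (fun x => norm_nonneg _) (fun x => ?_) hmaj
    have hnx : ‖F x‖ = |(P x.2).coeff x.1.1 * (P x.2).coeff x.1.2|
        * Complex.abs z ^ x.1.1 * Complex.abs w ^ x.1.2 := by
      rw [hFdef]
      simp only [norm_mul, norm_pow, Complex.norm_eq_abs, Complex.abs_ofReal]
    rw [hnx, abs_mul]
    calc |(P x.2).coeff x.1.1| * |(P x.2).coeff x.1.2|
        * Complex.abs z ^ x.1.1 * Complex.abs w ^ x.1.2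
        = (|(P x.2).coeff x.1.1| * Complex.abs z ^ x.1.1)
          * (|(P x.2).coeff x.1.2| * Complex.abs w ^ x.1.2) := by ring
      _ ≤ (hs x.2 * E * rz ^ x.1.1) * (hs x.2 * E * rw' ^ x.1.2) := by
          apply mul_le_mul (hcb _ _) (hcbw _ _)
            (mul_nonneg (abs_nonneg _) (pow_nonneg (AbsoluteValue.nonneg _ _) _))
            (mul_nonneg (mul_nonneg (hsnn _) (le_of_lt hEpos)) (pow_nonneg hrznn _))
      _ = (rz ^ x.1.1 * rw' ^ x.1.2) * ((E * E) * hs x.2 ^ 2) := by ring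
  have hF : Summable F := Summable.of_norm hFnorm
  -- fiberwise over n : finite product
  have hfib2 : ∀ n : ℕ, HasSum (fun jk : ℕ × ℕ => F (jk, n))
      (Polynomial.aeval z (P n) * Polynomial.aeval w (P n)) := by
    intro n
    set d := (P n).natDegree with hd
    have hzero : ∀ jk : ℕ × ℕ, jk ∉ (range (d + 1)) ×ˢ (range (d + 1)) → F (jk, n) = 0 := by
      intro jk hjk
      rw [Finset.mem_product, not_and_or] at hjk
      rw [hFdef]
      dsimp only
      rcases hjk with h | h
      · have : (P n).coeff jk.1 = 0 := Polynomial.coeff_eq_zero_of_natDegree_lt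
          (by have := Finset.mem_range.not.mp h; omega)
        rw [this]
        simp
      · have : (P n).coeff jk.2 = 0 := Polynomial.coeff_eq_zero_of_natDegree_lt
          (by have := Finset.mem_range.not.mp h; omega)
        rw [this]
        simp
    have hsum := hasSum_sum_of_ne_finset_zero (L := SummationFilter.unconditional (ℕ × ℕ)) hzero
    have hval : ∑ jk ∈ (range (d + 1)) ×ˢ (range (d + 1)), F (jk, n)
        = Polynomial.aeval z (P n) * Polynomial.aeval w (P n) := by
      rw [Finset.sum_product]
      have hz1 : Polynomial.aeval z (P n) = ∑ j ∈ range (d + 1), ((P n).coeff j : ℂ) * z ^ j := by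
        rw [Polynomial.aeval_eq_sum_range]
        apply Finset.sum_congr rfl
        intro j _
        rw [Algebra.smul_def]
        rfl
      have hw1 : Polynomial.aeval w (P n) = ∑ k ∈ range (d + 1), ((P n).coeff k : ℂ) * w ^ k := by
        rw [Polynomial.aeval_eq_sum_range]
        apply Finset.sum_congr rfl
        intro k _
        rw [Algebra.smul_def]
        rfl
      rw [hz1, hw1, Finset.sum_mul_sum]
      apply Finset.sum_congr rfl
      intro j _
      apply Finset.sum_congr rfl
      intro k _
      rw [hFdef]
      push_cast
      ring
    rw [hval] at hsum
    exact hsum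
  -- fiberwise over (j,k)
  have hfib1 : ∀ jk : ℕ × ℕ, HasSum (fun n : ℕ => F (jk, n))
      ((a jk.1 jk.2 : ℂ) * z ^ jk.1 * w ^ jk.2) := by
    intro jk
    obtain ⟨j, k⟩ := jk
    have hsum : Summable (fun n => (P n).coeff j * (P n).coeff k) := (hpart1 j k).of_abs
    have h1 : HasSum (fun n => (P n).coeff j * (P n).coeff k) (a j k) := by
      rw [ha j k]
      exact hsum.hasSum
    have h2 : HasSum (fun n => (((P n).coeff j * (P n).coeff k : ℝ) : ℂ)) ((a j k : ℂ)) :=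
      Complex.ofRealCLM.hasSum h1
    have h3 := h2.mul_right (z ^ j * w ^ k)
    have heq : (fun n => (((P n).coeff j * (P n).coeff k : ℝ) : ℂ) * (z ^ j * w ^ k))
        = fun n => F ((j, k), n) := by
      funext n
      rw [hFdef]
      dsimp only
      ring
    rw [heq] at h3
    have hval : (a j k : ℂ) * (z ^ j * w ^ k) = (a j k : ℂ) * z ^ j * w ^ k := by ring
    rw [hval] at h3
    exact h3
  -- assemble
  have hT := hF.hasSum
  have hmain : HasSum (fun jk : ℕ × ℕ => (a jk.1 jk.2 : ℂ) * z ^ jk.1 * w ^ jk.2) (∑' x, F x) :=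
    HasSum.prod_fiberwise hT hfib1
  have hswap : HasSum (fun y : ℕ × (ℕ × ℕ) => F (y.2, y.1)) (∑' x, F x) := by
    have := (Equiv.prodComm ℕ (ℕ × ℕ)).hasSum_iff (f := F) (a := ∑' x, F x)
    apply this.mpr hT
  have hrow : HasSum (fun n : ℕ => Polynomial.aeval z (P n) * Polynomial.aeval w (P n))
      (∑' x, F x) := HasSum.prod_fiberwise hswap hfib2
  rw [hrow.tsum_eq]
  exact hmain
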